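/- Let p be an odd prime, k ≥ (p-1)/2, and D ⊆ F_p with |D| ≥ k+2, and δ ∈ F_p \ D. Then for every γ ∈ F_p with γ ≠ δ^k, there exists a k-element subset {β_1,...,β_k} ⊆ D such that ∏_{i=1}^k (δ - β_i) = δ^k - γ. -/
import Mathlib


open Finset

theorem stmt12 (p : ℕ) [Fact p.Prime] (hodd : Odd p) (k : ℕ)
    (hk : (p - 1) / 2 ≤ k)
    (D : Finset (ZMod p)) (hD : k + 2 ≤ D.card)
    (δ : ZMod p) (hδ : δ ∉ D)
    (γ : ZMod p) (hγ : γ ≠ δ ^ k) :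
    ∃ T ⊆ D, T.card = k ∧ (∏ β ∈ T, (δ - β)) = δ ^ k - γ := by
  have hp : p.Prime := Fact.out
  obtain ⟨D', hD'sub, hD'card⟩ := Finset.exists_subset_card_eq hD
  have hne : ∀ α ∈ D', δ - α ≠ 0 := by
    intro α hα h
    apply hδ
    have : δ = α := by linear_combination h
    rw [this]; exact hD'sub hα
  set P := ∏ α ∈ D', (δ - α) with hP
  have hPne : P ≠ 0 := Finset.prod_ne_zero_iff.mpr hne
  set c := δ ^ k - γ with hc
  have hcne : c ≠ 0 := sub_ne_zero.mpr (Ne.symm hγ)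
  set d := P * c⁻¹ with hd
  have hdne : d ≠ 0 := mul_ne_zero hPne (inv_ne_zero hcne)
  set A := D'.image (fun α => δ - α) with hA
  have hAcard : A.card = k + 2 := by
    rw [hA, Finset.card_image_of_injective _ sub_right_injective, hD'card]
  have hAne : ∀ s ∈ A, s ≠ 0 := by
    intro s hs
    rw [hA, Finset.mem_image] at hs
    obtain ⟨α, hα, rfl⟩ := hs
    exact hne α hα
  set B := A.image (fun s => d * s⁻¹) with hB
  have hBcard : B.card = k + 2 := by
    rw [hB, Finset.card_image_of_injOn, hAcard]
    intro s hs t ht hst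
    exact inv_injective (mul_left_cancel₀ hdne hst)
  have hBne : ∀ s ∈ B, s ≠ 0 := by
    intro s hs
    rw [hB, Finset.mem_image] at hs
    obtain ⟨t, ht, rfl⟩ := hs
    exact mul_ne_zero hdne (inv_ne_zero (hAne t ht))
  -- cardinality of union bounded by p - 1
  have hunion : (A ∪ B).card ≤ p - 1 := by
    have hsub : A ∪ B ⊆ (Finset.univ : Finset (ZMod p)).erase 0 := by
      intro x hx
      rw [Finset.mem_erase]
      rcases Finset.mem_union.mp hx with h | h
      · exact ⟨hAne x h, Finset.mem_univ x⟩
      · exact ⟨hBne x h, Finset.mem_univ x⟩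
    calc (A ∪ B).card ≤ _ := Finset.card_le_card hsub
      _ = p - 1 := by
        rw [Finset.card_erase_of_mem (Finset.mem_univ 0), Finset.card_univ, ZMod.card]
  have h2k : p - 1 ≤ 2 * k := by
    have he : Even (p - 1) := by
      rcases hodd with ⟨m, rfl⟩
      simp [even_two_mul m]
    have := Nat.div_mul_cancel he.two_dvd
    omega
  have hinter : 3 ≤ (A ∩ B).card := by
    have := Finset.card_inter_add_card_union A B
    omega
  -- at most two elements square to d
  have hsq : ((A ∩ B).filter (fun s => s * s = d)).card ≤ 2 := by
    by_cases hE : ((A ∩ B).filter (fun s => s * s = d)) = ∅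
    · simp [hE]
    · obtain ⟨s₀, hs₀⟩ := Finset.nonempty_of_ne_empty hE
      have hsub : ((A ∩ B).filter (fun s => s * s = d)) ⊆ {s₀, -s₀} := by
        intro t ht
        rw [Finset.mem_filter] at ht hs₀
        have : (t - s₀) * (t + s₀) = 0 := by linear_combination ht.2 - hs₀.2
        rcases mul_eq_zero.mp this with h | h
        · simp [sub_eq_zero.mp h]
        · have : t = -s₀ := by linear_combination h
          simp [this]
      calc _ ≤ ({s₀, -s₀} : Finset (ZMod p)).card := Finset.card_le_card hsub
        _ ≤ 2 := Finset.card_insert_le _ _ |>.trans (by simp)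
  -- pick s in A ∩ B with s² ≠ d
  have hex : ∃ s ∈ A ∩ B, s * s ≠ d := by
    by_contra h
    push_neg at h
    have : A ∩ B ⊆ (A ∩ B).filter (fun s => s * s = d) := by
      intro s hs; rw [Finset.mem_filter]; exact ⟨hs, h s hs⟩
    have := Finset.card_le_card this
    omega
  obtain ⟨s, hsAB, hssd⟩ := hex
  have hsA := Finset.mem_inter.mp hsAB |>.1
  have hsB := Finset.mem_inter.mp hsAB |>.2
  have hs0 := hAne s hsA
  rw [hA, Finset.mem_image] at hsA
  obtain ⟨x, hxD', hxs⟩ := hsA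
  rw [hB, Finset.mem_image] at hsB
  obtain ⟨t, htA, hts⟩ := hsB
  have ht0 := hAne t htA
  have hst : s * t = d := by
    rw [← hts]; field_simp
  rw [hA, Finset.mem_image] at htA
  obtain ⟨y, hyD', hyt⟩ := htA
  have hsx : δ - x = s := hxs
  have hty : δ - y = t := hyt
  have hxy : x ≠ y := by
    intro h
    apply hssd
    rw [← hst, ← hsx, ← hty, h]
  refine ⟨(D'.erase x).erase y, ?_, ?_, ?_⟩
  · exact ((Finset.erase_subset _ _).trans (Finset.erase_subset _ _)).trans hD'sub
  · rw [Finset.card_erase_of_mem (Finset.mem_erase.mpr ⟨Ne.symm hxy, hyD'⟩),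
        Finset.card_erase_of_mem hxD', hD'card]
    omega
  · have key : (δ - x) * ((δ - y) * ∏ β ∈ (D'.erase x).erase y, (δ - β)) = P := by
      rw [hP, ← Finset.mul_prod_erase _ _ hxD',
          ← Finset.mul_prod_erase _ _ (Finset.mem_erase.mpr ⟨Ne.symm hxy, hyD'⟩)]
    have hdQ : d * ∏ β ∈ (D'.erase x).erase y, (δ - β) = P := by
      rw [← hst, ← hsx, ← hty]; linear_combination key
    rw [hd] at hdQ
    have hcc : c * c⁻¹ = 1 := mul_inv_cancel₀ hcne
    have h1 : P * (∏ β ∈ (D'.erase x).erase y, (δ - β)) = P * c := by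
      linear_combination c * hdQ - P * (∏ β ∈ (D'.erase x).erase y, (δ - β)) * hcc
    exact mul_left_cancel₀ hPne h1
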